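/- arXiv:2305.03646 — 5 statements merged into one kernel-verified Lean document; each statement's English description precedes it below -/
import Mathlib

section
/- Suppose λ is a real number such that φ·ξ = λξ where ξ is a nonzero spinor, vol₇·ξ = −ξ, and φ·ψ = 7·vol₇ − 6φ with ψ = φ·vol₇ in the Clifford algebra. Then λ = 7 or λ = −1. -/
/-- If φ·ξ = λξ for a nonzero spinor ξ with vol₇·ξ = −ξ,
ψ = φ·vol₇ and φ·ψ = 7·vol₇ − 6φ (as operators), then λ = 7 or λ = −1. -/
theorem stmt_4 {S : Type*} [AddCommGroup S] [Module ℝ S]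
    (cphi cpsi vol : S →ₗ[ℝ] S) (ξ : S) (hξ : ξ ≠ 0) (lam : ℝ)
    (hvol : vol ξ = -ξ)
    (hpsi : cpsi = cphi ∘ₗ vol)
    (hmul : cphi ∘ₗ cpsi = (7 : ℝ) • vol - (6 : ℝ) • cphi)
    (heig : cphi ξ = lam • ξ) :
    lam = 7 ∨ lam = -1 := by
  have h1 : (cphi ∘ₗ cpsi) ξ = (-(lam * lam) : ℝ) • ξ := by
    rw [LinearMap.comp_apply, hpsi, LinearMap.comp_apply, hvol, map_neg, heig, map_neg, map_smul, heig,
      smul_smul, neg_smul]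
  rw [hmul] at h1
  have h2 : ((-7 : ℝ) - 6 * lam) • ξ = (-(lam * lam) : ℝ) • ξ := by
    rw [← h1, LinearMap.sub_apply, LinearMap.smul_apply, LinearMap.smul_apply, hvol, heig,
      smul_neg, smul_smul, sub_smul, neg_smul]
  have h3 : (((-7 : ℝ) - 6 * lam) - (-(lam * lam))) • ξ = 0 := by
    rw [sub_smul, h2, sub_self]
  rcases smul_eq_zero.mp h3 with h | h
  · have : (lam - 7) * (lam + 1) = 0 := by nlinarith
    rcases mul_eq_zero.mp this with h | h
    · left; linarith
    · right; linarith
  · exact absurd h hξ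
end

section
/- Under the isomorphism s : Λ⁰ ⊕ Λ¹ → S(X) given by (f, v) ↦ (f − v)·ξ, Clifford multiplication by a 1-form u satisfies u·(f, v) = (⟨u, v⟩, −fu − (u ∧ v) ⌟ φ). -/
/-- Under the isomorphism s : Λ⁰ ⊕ Λ¹ → S(X), (f, v) ↦ (f − v)·ξ = f•ξ − v·ξ,
Clifford multiplication by a 1-form u satisfies u·(f, v) = (⟨u, v⟩, −fu − (u ∧ v) ⌟ φ).
Here `cl1`, `cl2` are Clifford multiplication by 1-forms and 2-forms, `wedge` the wedge
product of 1-forms, `ip` the inner product, `contr` the contraction ω ↦ ω ⌟ φ; the Clifford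
relation u·v = u∧v − ⟨u,v⟩ and the identity ω·ξ = −(ω ⌟ φ)·ξ are hypotheses. -/
theorem stmt_6 {Ω1 Ω2 S : Type*} [AddCommGroup Ω1] [Module ℝ Ω1]
    [AddCommGroup Ω2] [Module ℝ Ω2] [AddCommGroup S] [Module ℝ S]
    (cl1 : Ω1 →ₗ[ℝ] S →ₗ[ℝ] S) (cl2 : Ω2 →ₗ[ℝ] S →ₗ[ℝ] S)
    (contr : Ω2 →ₗ[ℝ] Ω1) (wedge : Ω1 →ₗ[ℝ] Ω1 →ₗ[ℝ] Ω2)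
    (ip : Ω1 →ₗ[ℝ] Ω1 →ₗ[ℝ] ℝ) (ξ : S)
    (hclrel : ∀ u v : Ω1, cl1 u ∘ₗ cl1 v = cl2 (wedge u v) - ip u v • LinearMap.id)
    (h2form : ∀ ω : Ω2, cl2 ω ξ = -(cl1 (contr ω) ξ)) :
    ∀ (f : ℝ) (u v : Ω1),
      cl1 u ((fun p : ℝ × Ω1 => p.1 • ξ - cl1 p.2 ξ) (f, v)) =
        (fun p : ℝ × Ω1 => p.1 • ξ - cl1 p.2 ξ)
          (ip u v, -(f • u) - contr (wedge u v)) := by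
  intro f u v
  have h := congrArg (fun L : S →ₗ[ℝ] S => L ξ) (hclrel u v)
  simp only [LinearMap.comp_apply, LinearMap.sub_apply, LinearMap.smul_apply,
    LinearMap.id_apply] at h
  simp only [map_sub, map_smul, map_neg, LinearMap.sub_apply, LinearMap.neg_apply,
    LinearMap.smul_apply, h, h2form]
  abel
end

section
/- Suppose D⁻_{A_C}(r^{λ−1} Σ_{j=0}^m (log r)^j η_j) = 0 with η_m ≠ 0, where D⁻_{A_C} = dr·(∂/∂r + (1/r)(7/2 − D_{A_Σ})) and D_{A_Σ} is self-adjoint. Then m = 0; i.e., homogeneous solutions have no polynomial log terms. -/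
lemma poly_coeff_zero {n : ℕ} (a : ℕ → ℝ)
    (h : ∀ t : ℝ, ∑ j ∈ Finset.range n, a j * t ^ j = 0) :
    ∀ j < n, a j = 0 := by
  intro j hj
  set p : Polynomial ℝ := ∑ k ∈ Finset.range n, Polynomial.C (a k) * Polynomial.X ^ k with hp
  have hp0 : p = 0 := by
    apply Polynomial.funext
    intro t
    simp [hp, Polynomial.eval_finset_sum, h t]
  have : p.coeff j = a j := by
    simp [hp, Polynomial.finset_sum_coeff, Polynomial.coeff_C_mul, Polynomial.coeff_X_pow,
      Finset.sum_ite_eq' (Finset.range n) j, hj]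
  rw [hp0] at this
  simpa using this.symm

/-- If D⁻(r^{λ−1} Σ_{j=0}^m (log r)^j η_j) = 0 with η_m ≠ 0, where
D⁻ = dr·(∂/∂r + (1/r)(7/2 − D_{A_Σ})) and D_{A_Σ} is self-adjoint, then m = 0:
homogeneous solutions have no polynomial log terms. -/
theorem stmt_9 {W : Type*} [NormedAddCommGroup W] [InnerProductSpace ℝ W]
    (E0 D : W →ₗ[ℝ] W) (hE0 : E0 ∘ₗ E0 = -LinearMap.id)
    (hsa : ∀ x y : W, (inner ℝ (D x) y : ℝ) = inner ℝ x (D y))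
    (lam : ℝ) (m : ℕ) (η : ℕ → W) (hm : η m ≠ 0)
    (hker : ∀ r : ℝ, 0 < r →
        E0 (deriv (fun s : ℝ =>
              (s ^ (lam - 1)) • ∑ j ∈ Finset.range (m + 1), (Real.log s) ^ j • η j) r +
          (1 / r) • ((7 / 2 : ℝ) •
              ((r ^ (lam - 1)) • ∑ j ∈ Finset.range (m + 1), (Real.log r) ^ j • η j) -
            D ((r ^ (lam - 1)) • ∑ j ∈ Finset.range (m + 1), (Real.log r) ^ j • η j))) = 0) :
    m = 0 := by
  by_contra hm0
  have hm1 : 1 ≤ m := Nat.one_le_iff_ne_zero.mpr hm0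
  set μ : ℝ := lam + 5 / 2 with hμ
  set b : ℕ → W := fun j => if j < m then ((j : ℝ) + 1) • η (j + 1) else 0 with hb
  set c : ℕ → W := fun j => μ • η j - D (η j) + b j with hc
  -- E0 is injective
  have hE0inj : ∀ x : W, E0 x = 0 → x = 0 := by
    intro x hx
    have := congrArg (fun f : W →ₗ[ℝ] W => f x) hE0
    simp only [LinearMap.comp_apply, LinearMap.neg_apply, LinearMap.id_apply] at this
    rw [hx] at this
    simpa using this.symm
  -- the vector polynomial identity
  have key : ∀ t : ℝ, ∑ j ∈ Finset.range (m + 1), t ^ j • c j = 0 := by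
    intro t
    set r : ℝ := Real.exp t with hrdef
    have hr : 0 < r := Real.exp_pos t
    have hlog : Real.log r = t := Real.log_exp t
    set v : W := ∑ j ∈ Finset.range (m + 1), (Real.log r) ^ j • η j with hv
    set w : W := ∑ j ∈ Finset.range (m + 1), ((j : ℝ) * (Real.log r) ^ (j - 1)) • η j with hw
    have hu : HasDerivAt (fun s : ℝ => s ^ (lam - 1)) ((lam - 1) * r ^ (lam - 2)) r := by
      have h := Real.hasDerivAt_rpow_const (x := r) (p := lam - 1) (Or.inl hr.ne')
      have he : lam - 1 - 1 = lam - 2 := by ring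
      rwa [he] at h
    have hvd : HasDerivAt (fun s : ℝ => ∑ j ∈ Finset.range (m + 1), (Real.log s) ^ j • η j)
        (∑ j ∈ Finset.range (m + 1), ((j : ℝ) * (Real.log r) ^ (j - 1) * r⁻¹) • η j) r := by
      apply HasDerivAt.fun_sum
      intro j hj
      exact ((Real.hasDerivAt_log hr.ne').pow j).smul_const (η j)
    have hg : HasDerivAt (fun s : ℝ =>
        (s ^ (lam - 1)) • ∑ j ∈ Finset.range (m + 1), (Real.log s) ^ j • η j)
        ((r ^ (lam - 1)) • ∑ j ∈ Finset.range (m + 1),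
            ((j : ℝ) * (Real.log r) ^ (j - 1) * r⁻¹) • η j
          + ((lam - 1) * r ^ (lam - 2)) • v) r := hu.smul hvd
    have hker' := hker r hr
    rw [hg.deriv] at hker'
    have heq := hE0inj _ hker'
    -- rpow arithmetic
    have hinv : r⁻¹ = r ^ (-1 : ℝ) := (Real.rpow_neg_one r).symm
    have hr1 : r ^ (lam - 1) * r⁻¹ = r ^ (lam - 2) := by
      rw [hinv, ← Real.rpow_add hr]; congr 1; ring
    have hr2 : (1 / r) * r ^ (lam - 1) = r ^ (lam - 2) := by
      rw [one_div, hinv, ← Real.rpow_add hr]; ring_nf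
    -- rewrite the sum with r⁻¹ pulled out
    have hsum : (∑ j ∈ Finset.range (m + 1),
        ((j : ℝ) * (Real.log r) ^ (j - 1) * r⁻¹) • η j) = r⁻¹ • w := by
      rw [hw, Finset.smul_sum]
      apply Finset.sum_congr rfl
      intro j hj
      rw [smul_smul]
      ring_nf
    rw [hsum] at heq
    have heq2 : (r ^ (lam - 2)) • (w + (lam - 1) • v + ((7/2 : ℝ) • v - D v)) = 0 := by
      rw [map_smul D] at heq
      rw [smul_smul, hr1, smul_comm ((7:ℝ)/2), ← smul_sub, smul_smul, hr2,
        show ((lam - 1) * r ^ (lam - 2)) • v = (r ^ (lam - 2)) • ((lam - 1) • v) from by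
          rw [smul_smul, mul_comm],
        ← smul_add, ← smul_add] at heq
      exact heq
    have hρ : r ^ (lam - 2) ≠ 0 := (Real.rpow_pos_of_pos hr _).ne'
    have hbr : w + (lam - 1) • v + ((7/2 : ℝ) • v - D v) = 0 :=
      (smul_eq_zero.mp heq2).resolve_left hρ
    -- now convert to the coefficient form
    have hwb : w = ∑ j ∈ Finset.range (m + 1), t ^ j • b j := by
      rw [hw, hlog, Finset.sum_range_succ' (fun j => ((j : ℝ) * t ^ (j - 1)) • η j) m,
        Finset.sum_range_succ (fun j => t ^ j • b j) m]
      have hbm : b m = 0 := by simp [hb]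
      rw [hbm, smul_zero, add_zero]
      simp only [Nat.cast_zero, zero_mul, zero_smul, add_zero]
      apply Finset.sum_congr rfl
      intro j hj
      have hjm : j < m := Finset.mem_range.mp hj
      simp only [hb, if_pos hjm]
      rw [smul_smul]
      push_cast
      ring_nf
    have hDv : D v = ∑ j ∈ Finset.range (m + 1), t ^ j • D (η j) := by
      rw [hv, hlog, map_sum]
      simp [map_smul]
    have hchain : ∑ j ∈ Finset.range (m + 1), t ^ j • c j = μ • v - D v + w := by
      rw [hDv, hwb, hv, hlog, Finset.smul_sum, ← Finset.sum_sub_distrib,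
        ← Finset.sum_add_distrib]
      apply Finset.sum_congr rfl
      intro j hj
      simp only [hc, smul_add, smul_sub, smul_comm (t ^ j) μ]
    rw [hchain, show μ • v - D v + w = w + (lam - 1) • v + ((7/2 : ℝ) • v - D v) from by
      rw [hμ]; module]
    exact hbr
  -- extract that all coefficients vanish
  have hczero : ∀ j < m + 1, c j = 0 := by
    intro j hj
    have hin : ∀ x : W, (inner ℝ (c j) x : ℝ) = 0 := by
      intro x
      have h := poly_coeff_zero (fun k => (inner ℝ (c k) x : ℝ)) (fun t => by
        have := key t
        have h2 := congrArg (fun y => (inner ℝ y x : ℝ)) this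
        simpa [sum_inner, real_inner_smul_left, mul_comm] using h2) j hj
      exact h
    exact inner_self_eq_zero.mp (hin (c j))
  -- final contradiction
  have hcm : D (η m) = μ • η m := by
    have h := hczero m (Nat.lt_succ_self m)
    simp only [hc, hb, lt_irrefl, if_false, add_zero, sub_eq_zero] at h
    exact h.symm
  have hcm1 : μ • η (m - 1) - D (η (m - 1)) + (m : ℝ) • η m = 0 := by
    have h := hczero (m - 1) (by omega)
    have hlt : m - 1 < m := by omega
    have hsucc : m - 1 + 1 = m := by omega
    have hcast : ((m - 1 : ℕ) : ℝ) + 1 = (m : ℝ) := by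
      have : ((m - 1 : ℕ) : ℝ) = (m : ℝ) - 1 := by
        push_cast [Nat.cast_sub hm1]; ring
      rw [this]; ring
    simp only [hc, hb, if_pos hlt, hsucc, hcast] at h
    exact h
  have hfin : (m : ℝ) * (inner ℝ (η m) (η m) : ℝ) = 0 := by
    have h := congrArg (fun y => (inner ℝ y (η m) : ℝ)) hcm1
    simp only [inner_zero_left, inner_add_left, inner_sub_left, real_inner_smul_left] at h
    rw [hsa (η (m-1)) (η m), hcm, real_inner_smul_right] at h
    linarith
  have : (inner ℝ (η m) (η m) : ℝ) = 0 := by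
    have hmne : (m : ℝ) ≠ 0 := Nat.cast_ne_zero.mpr hm0
    exact (mul_eq_zero.mp hfin).resolve_left hmne
  exact hm (inner_self_eq_zero.mp this)
end

section
/- Let Δ ≅ ℂ ⊕ m*_ℂ be the 8-dimensional spin representation of spin(7) with orthonormal basis e⁰, e¹,…,e⁷ and G₂-invariant 4-form Φ = e⁰∧φ + *φ. The element Ĩ_a := −e⁰∧e^a + (1/3) e^a ⌟ φ of Λ²(Δ)* satisfies Ĩ_a ⌟ Φ = −Ĩ_a, i.e., Ĩ_a lies in Λ²₂₁. -/
open Finset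

/-- The 2-form Ĩ_a = −e⁰∧e^a + (1/3) e^a ⌟ φ on Δ ≅ ℝ⁸ (index 0 = e⁰), in components:
Ĩ_a(0,b) = −δ_{ab}, Ĩ_a(b,0) = δ_{ab}, Ĩ_a(b,c) = (1/3)φ_{abc}. -/
noncomputable def Itil (φ : Fin 7 → Fin 7 → Fin 7 → ℝ) (a : Fin 7) : Fin 8 → Fin 8 → ℝ :=
  Fin.cons
    (Fin.cons (0 : ℝ) fun b => -(if a = b then (1 : ℝ) else 0))
    (fun b => Fin.cons (if a = b then (1 : ℝ) else 0) (fun c => (1 / 3) * φ a b c))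

/-- The Spin(7) 4-form Φ = e⁰∧φ + ψ in components on Fin 8 (index 0 = e⁰). -/
noncomputable def BigPhi (φ : Fin 7 → Fin 7 → Fin 7 → ℝ) (ψ : Fin 7 → Fin 7 → Fin 7 → Fin 7 → ℝ) :
    Fin 8 → Fin 8 → Fin 8 → Fin 8 → ℝ :=
  Fin.cons
    (Fin.cons (fun _ _ => 0)
      (fun b => Fin.cons (fun _ => 0) (fun c => Fin.cons 0 (fun d => φ b c d))))
    (fun a => Fin.cons
      (Fin.cons (fun _ => 0) (fun c => Fin.cons 0 (fun d => -(φ a c d))))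
      (fun b => Fin.cons
        (Fin.cons 0 (fun d => φ a b d))
        (fun c => Fin.cons (-(φ a b c)) (fun d => ψ a b c d))))

/-- The element Ĩ_a = −e⁰∧e^a + (1/3) e^a ⌟ φ of Λ²(Δ)* satisfies
Ĩ_a ⌟ Φ = −Ĩ_a (componentwise, (α⌟Φ)_{μν} = ½ α_{ρσ} Φ_{ρσμν}), i.e. Ĩ_a ∈ Λ²₂₁,
given the G₂ structure-constant identities for φ and ψ. -/
theorem stmt_13 (φ : Fin 7 → Fin 7 → Fin 7 → ℝ) (ψ : Fin 7 → Fin 7 → Fin 7 → Fin 7 → ℝ)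
    (hφ1 : ∀ i j k, φ i j k = -φ j i k)
    (hφ2 : ∀ i j k, φ i j k = -φ i k j)
    (hψ1 : ∀ i j k l, ψ i j k l = -ψ j i k l)
    (hψ2 : ∀ i j k l, ψ i j k l = -ψ i k j l)
    (hψ3 : ∀ i j k l, ψ i j k l = -ψ i j l k)
    (h1 : ∀ i j a b, ∑ k, φ i j k * φ a b k =
      (if i = a then (1:ℝ) else 0) * (if j = b then 1 else 0) -
        (if i = b then (1:ℝ) else 0) * (if j = a then 1 else 0) + ψ i j a b)
    (h2 : ∀ i j a b c, ∑ k, φ i j k * ψ a b c k =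
      -((if i = a then (1:ℝ) else 0) * φ j b c) - (if i = b then (1:ℝ) else 0) * φ a j c -
        (if i = c then (1:ℝ) else 0) * φ a b j + (if j = a then (1:ℝ) else 0) * φ i b c +
        (if j = b then (1:ℝ) else 0) * φ a i c + (if j = c then (1:ℝ) else 0) * φ a b i)
    (a : Fin 7) (μ ν : Fin 8) :
    (1 / 2 : ℝ) * ∑ ρ : Fin 8, ∑ σ : Fin 8, Itil φ a ρ σ * BigPhi φ ψ ρ σ μ ν =
      -(Itil φ a μ ν) := by
  have e8 : ∀ f : Fin 8 → ℝ, ∑ ρ : Fin 8, f ρ = f 0 + ∑ i : Fin 7, f i.succ :=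
    fun f => Fin.sum_univ_succ f
  -- basic consequences
  have hswap : ∀ x y c : Fin 7, φ x y c = φ c x y := fun x y c => by
    rw [hφ2 x y c, hφ1 x c y, neg_neg]
  have hφyy : ∀ x y : Fin 7, φ x y y = 0 := fun x y => by
    have := hφ2 x y y; linarith
  have hφxx : ∀ x y : Fin 7, φ x x y = 0 := fun x y => by
    have := hφ1 x x y; linarith
  have hφyxy : ∀ x y : Fin 7, φ x y x = 0 := fun x y => by
    rw [hswap x y x]; exact hφxx x y
  have hψzz : ∀ x y z : Fin 7, ψ x y z z = 0 := fun x y z => by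
    have := hψ3 x y z z; linarith
  have hψacx : ∀ x c : Fin 7, ψ a x c x = 0 := fun x c => by
    rw [hψ2 a x c x, hψzz, neg_zero]
  have hψswap : ∀ x y b c : Fin 7, ψ x y b c = ψ b c x y := fun x y b c => by
    rw [hψ2 x y b c, hψ1 x b y c, neg_neg, hψ3 b x y c, hψ2 b x c y, neg_neg]
  have hδ1 : ∀ (f : Fin 7 → ℝ) (x0 : Fin 7),
      ∑ x, (if x0 = x then (1:ℝ) else 0) * f x = f x0 := fun f x0 => by
    simp [ite_mul]
  have hδ2 : ∀ (f : Fin 7 → ℝ) (x0 : Fin 7),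
      ∑ x, (if x = x0 then (1:ℝ) else 0) * f x = f x0 := fun f x0 => by
    simp [ite_mul]
  have hδδ : ∀ c : Fin 7, ∑ x, (if a = x then (1:ℝ) else 0) * (if x = c then 1 else 0)
      = if a = c then 1 else 0 := fun c => hδ1 _ a
  -- key contraction 1 : ∑ φ_{axy} φ_{xyc} = 6 δ_{ac}
  have key1 : ∀ c : Fin 7, ∑ x, ∑ y, φ a x y * φ x y c
      = 6 * (if a = c then 1 else 0) := by
    intro c
    have step : ∀ x : Fin 7, ∑ y, φ a x y * φ x y c
        = (if a = c then (1:ℝ) else 0) - (if a = x then 1 else 0) * (if x = c then 1 else 0) := by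
      intro x
      have : ∑ y, φ a x y * φ x y c = ∑ y, φ a x y * φ c x y :=
        Finset.sum_congr rfl fun y _ => by rw [hswap x y c]
      rw [this, h1 a x c x, hψacx x c, if_pos rfl, mul_one, add_zero]
    rw [Finset.sum_congr rfl fun x _ => step x, Finset.sum_sub_distrib, hδδ c,
      Finset.sum_const]
    simp only [Finset.card_univ, Fintype.card_fin, nsmul_eq_mul, Nat.cast_ofNat]
    split <;> norm_num
  -- key contraction 2 : ∑ φ_{axy} ψ_{xybc} = 4 φ_{abc}
  have key2 : ∀ b c : Fin 7, ∑ x, ∑ y, φ a x y * ψ x y b c = 4 * φ a b c := by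
    intro b c
    have step : ∀ x : Fin 7, ∑ y, φ a x y * ψ x y b c
        = -((if a = x then (1:ℝ) else 0) * φ b c x) + (if x = b then 1 else 0) * φ a c x
          + (if x = c then 1 else 0) * φ b a x + φ b c a := by
      intro x
      have : ∑ y, φ a x y * ψ x y b c = ∑ y, φ a x y * ψ b c x y :=
        Finset.sum_congr rfl fun y _ => by rw [hψswap x y b c]
      rw [this, h2 a x b c x, hφyxy x c, hφyy b x, if_pos rfl, one_mul]
      ring
    rw [Finset.sum_congr rfl fun x _ => step x]
    have e1 : ∑ x, (-((if a = x then (1:ℝ) else 0) * φ b c x)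
        + (if x = b then 1 else 0) * φ a c x
        + (if x = c then 1 else 0) * φ b a x + φ b c a)
        = -(∑ x, (if a = x then (1:ℝ) else 0) * φ b c x)
          + (∑ x, (if x = b then (1:ℝ) else 0) * φ a c x)
          + (∑ x, (if x = c then (1:ℝ) else 0) * φ b a x)
          + ∑ _x : Fin 7, φ b c a := by
      rw [← Finset.sum_neg_distrib, ← Finset.sum_add_distrib, ← Finset.sum_add_distrib,
        ← Finset.sum_add_distrib]
    rw [e1, hδ1 (fun x => φ b c x) a, hδ2 (fun x => φ a c x) b, hδ2 (fun x => φ b a x) c,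
      Finset.sum_const]
    have r1 : φ b c a = φ a b c := hswap b c a
    have r2 : φ a c b = -φ a b c := hφ2 a c b
    have r3 : φ b a c = -φ a b c := hφ1 b a c
    rw [r1, r2, r3]
    simp; ring
  rcases Fin.eq_zero_or_eq_succ μ with rfl | ⟨b, rfl⟩ <;>
    rcases Fin.eq_zero_or_eq_succ ν with rfl | ⟨c, rfl⟩ <;>
    simp only [e8, Itil, BigPhi, Fin.cons_zero, Fin.cons_succ]
  · simp
  · -- μ = 0, ν = succ c
    have : ∀ x : Fin 7, ∑ y, 1 / 3 * φ a x y * φ x y c = 1/3 * ∑ y, φ a x y * φ x y c := by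
      intro x; rw [Finset.mul_sum]; exact Finset.sum_congr rfl fun y _ => by ring
    simp only [mul_zero, zero_mul, add_zero, zero_add, Finset.sum_const_zero, this,
      ← Finset.mul_sum, key1 c]
    ring
  · -- μ = succ b, ν = 0
    have : ∀ x : Fin 7, ∑ y, 1 / 3 * φ a x y * -φ x y b = -(1/3) * ∑ y, φ a x y * φ x y b := by
      intro x; rw [Finset.mul_sum]; exact Finset.sum_congr rfl fun y _ => by ring
    simp only [mul_zero, zero_mul, add_zero, zero_add, Finset.sum_const_zero, this,
      ← Finset.mul_sum, key1 b]
    rcases eq_or_ne a b with rfl | h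
    · simp; ring
    · simp [h]
  · -- μ = succ b, ν = succ c
    have e2 : ∀ x : Fin 7, ∑ y, 1 / 3 * φ a x y * ψ x y b c
        = 1/3 * ∑ y, φ a x y * ψ x y b c := by
      intro x; rw [Finset.mul_sum]; exact Finset.sum_congr rfl fun y _ => by ring
    have e3 : ∑ x : Fin 7, ((if a = x then (1:ℝ) else 0) * -φ x b c
          + ∑ y, 1 / 3 * φ a x y * ψ x y b c)
        = (∑ x : Fin 7, (if a = x then (1:ℝ) else 0) * -φ x b c)
          + 1/3 * ∑ x, ∑ y, φ a x y * ψ x y b c := by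
      rw [Finset.sum_add_distrib, Finset.mul_sum]
      congr 1
      exact Finset.sum_congr rfl fun x _ => by rw [e2 x, Finset.mul_sum]
    have e4 : ∑ x : Fin 7, (-if a = x then (1:ℝ) else 0) * φ x b c = -φ a b c := by
      have := hδ1 (fun x => φ x b c) a
      rw [← this, ← Finset.sum_neg_distrib]
      exact Finset.sum_congr rfl fun x _ => by ring
    have e5 : ∑ x : Fin 7, (if a = x then (1:ℝ) else 0) * -φ x b c = -φ a b c := by
      have := hδ1 (fun x => φ x b c) a
      rw [← this, ← Finset.sum_neg_distrib]
      exact Finset.sum_congr rfl fun x _ => by ring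
    rw [e3, e4, e5, key2 b c]
    ring
end

section
/- For the Spin(7)-invariant connection A_t = e^i I_i + φ(t) e^a I_a on the homogeneous bundle over S⁷ = Spin(7)/G₂ with curvature components F_{0a} = φ'(t) I_a and F_{bc} = (φ² − 1) f^i_{bc} I_i + (φ² − φ) f_{abc} I_a, the Spin(7)-instanton equation F_{0a} = (3/4) f_{abc} F_{bc} is equivalent to the scalar ODE φ' = 2(φ² − φ), using the structure constant relations f_{abc} = −(2/3)φ_{abc}, φ_{abc}φ_{dbc} = 6δ_{ad}, and f_{abc} f^i_{bc} = 0. -/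
/-- For the Spin(7)-invariant connection A_t = eⁱ I_i + φ(t) e^a I_a on
S⁷ = Spin(7)/G₂, with curvature components F_{0a} = φ'(t) I_a and
F_{bc} = (φ² − 1) f^i_{bc} I_i + (φ² − φ) f_{abc} I_a, the Spin(7)-instanton equation
F_{0a} = (3/4) f_{abc} F_{bc} is equivalent to the scalar ODE φ' = 2(φ² − φ), using the
structure constant relations f_{abc} = −(2/3)φ_{abc}, φ_{abc}φ_{dbc} = 6δ_{ad}
and f_{abc} f^i_{bc} = 0. -/
theorem stmt_19 {V : Type*} [AddCommGroup V] [Module ℝ V]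
    (Ia : Fin 7 → V) (Ii : Fin 14 → V)
    (hInd : LinearIndependent ℝ Ia)
    (f : Fin 7 → Fin 7 → Fin 7 → ℝ) (fi : Fin 14 → Fin 7 → Fin 7 → ℝ)
    (φc : Fin 7 → Fin 7 → Fin 7 → ℝ)
    (hf : ∀ a b c, f a b c = -(2 / 3 : ℝ) * φc a b c)
    (hφφ : ∀ a d, ∑ b, ∑ c, φc a b c * φc d b c = 6 * (if a = d then (1:ℝ) else 0))
    (hffi : ∀ a i, ∑ b, ∑ c, f a b c * fi i b c = 0)
    (φ : ℝ → ℝ) :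
    (∀ t, ∀ a, deriv φ t • Ia a =
        (3 / 4 : ℝ) • ∑ b, ∑ c, f a b c •
          (((φ t) ^ 2 - 1) • ∑ i, fi i b c • Ii i +
            ((φ t) ^ 2 - φ t) • ∑ d, f d b c • Ia d)) ↔
      (∀ t, deriv φ t = 2 * ((φ t) ^ 2 - φ t)) := by
  have hff : ∀ a d, ∑ b, ∑ c, f a b c * f d b c
      = (8/3) * (if a = d then (1:ℝ) else 0) := by
    intro a d
    have : ∀ b c, f a b c * f d b c = (4/9) * (φc a b c * φc d b c) := by
      intro b c; rw [hf, hf]; ring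
    simp only [this, ← Finset.mul_sum]
    rw [hφφ]; ring
  have key : ∀ t a, ((3 / 4 : ℝ) • ∑ b, ∑ c, f a b c •
          (((φ t) ^ 2 - 1) • ∑ i, fi i b c • Ii i +
            ((φ t) ^ 2 - φ t) • ∑ d, f d b c • Ia d))
      = (2 * ((φ t) ^ 2 - φ t)) • Ia a := by
    intro t a
    have expand : ∀ b c, f a b c •
          (((φ t) ^ 2 - 1) • ∑ i, fi i b c • Ii i +
            ((φ t) ^ 2 - φ t) • ∑ d, f d b c • Ia d)
        = (∑ i, (((φ t)^2 - 1) * (f a b c * fi i b c)) • Ii i)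
          + (∑ d, (((φ t)^2 - φ t) * (f a b c * f d b c)) • Ia d) := by
      intro b c
      rw [smul_add, smul_smul, smul_smul, Finset.smul_sum, Finset.smul_sum]
      congr 1 <;> refine Finset.sum_congr rfl fun x _ => ?_ <;>
        rw [smul_smul] <;> ring_nf
    simp only [expand, Finset.sum_add_distrib]
    have hIi : (∑ b, ∑ c, ∑ i, (((φ t)^2 - 1) * (f a b c * fi i b c)) • Ii i)
        = 0 := by
      have sw : ∀ b : Fin 7, (∑ c, ∑ i, (((φ t)^2 - 1) * (f a b c * fi i b c)) • Ii i)
          = ∑ i, ∑ c, (((φ t)^2 - 1) * (f a b c * fi i b c)) • Ii i :=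
        fun b => Finset.sum_comm
      simp only [sw]
      rw [Finset.sum_comm]
      refine Finset.sum_eq_zero fun i _ => ?_
      have : (∑ b, ∑ c, (((φ t)^2 - 1) * (f a b c * fi i b c)) • Ii i)
          = (((φ t)^2 - 1) * ∑ b, ∑ c, f a b c * fi i b c) • Ii i := by
        rw [Finset.mul_sum, Finset.sum_smul]
        refine Finset.sum_congr rfl fun b _ => ?_
        rw [Finset.mul_sum, Finset.sum_smul]
      rw [this, hffi, mul_zero, zero_smul]
    have hIa : (∑ b, ∑ c, ∑ d, (((φ t)^2 - φ t) * (f a b c * f d b c)) • Ia d)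
        = ((8/3) * ((φ t) ^ 2 - φ t)) • Ia a := by
      have sw : ∀ b : Fin 7, (∑ c, ∑ d, (((φ t)^2 - φ t) * (f a b c * f d b c)) • Ia d)
          = ∑ d, ∑ c, (((φ t)^2 - φ t) * (f a b c * f d b c)) • Ia d :=
        fun b => Finset.sum_comm
      simp only [sw]
      rw [Finset.sum_comm]
      have : ∀ d : Fin 7, (∑ b, ∑ c, (((φ t)^2 - φ t) * (f a b c * f d b c)) • Ia d)
          = (((φ t)^2 - φ t) * ∑ b, ∑ c, f a b c * f d b c) • Ia d := by
        intro d
        rw [Finset.mul_sum, Finset.sum_smul]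
        refine Finset.sum_congr rfl fun b _ => ?_
        rw [Finset.mul_sum, Finset.sum_smul]
      simp only [this, hff]
      rw [Finset.sum_eq_single a]
      · rw [if_pos rfl]; congr 1; ring
      · intro d _ hd
        rw [if_neg (Ne.symm hd)]
        simp
      · simp
    rw [hIi, hIa, zero_add, smul_smul]
    congr 1; ring
  constructor
  · intro h t
    have h0 := (h t 0).trans (key t 0)
    have := sub_eq_zero.mpr h0
    rw [← sub_smul] at this
    rcases smul_eq_zero.mp this with h' | h'
    · linarith [sub_eq_zero.mp (by linarith [h'] : deriv φ t - 2 * ((φ t)^2 - φ t) = 0)]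
    · exact absurd h' (hInd.ne_zero 0)
  · intro h t a
    rw [key t a, h t]
end
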